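/- With g_δ(q) = inf{p : D(p‖q) ≤ δ} the lower endpoint of the binary-KL ball of radius δ around q, if 0 < δ ≤ 0.2 then g_δ is differentiable on [0.4, 0.6] and satisfies g_δ'(q) ≥ 1/2 for all q ∈ [0.4, 0.6]. -/

import Mathlib

open Real Set Filter Topology

/-- Binary KL divergence `D(p‖q) = p·log(p/q) + (1-p)·log((1-p)/(1-q))`. -/
noncomputable def bernKL (p q : ℝ) : ℝ :=
  p * Real.log (p / q) + (1 - p) * Real.log ((1 - p) / (1 - q))

/-- Lower endpoint of the binary-KL ball of radius `δ` around `q`. -/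
noncomputable def gKL (δ q : ℝ) : ℝ :=
  sInf {p : ℝ | p ∈ Set.Icc (0 : ℝ) 1 ∧ bernKL p q ≤ δ}


lemma log_le_aux {x : ℝ} (hx : 1 ≤ x) : Real.log x ≤ (x - x⁻¹) / 2 := by
  set f : ℝ → ℝ := fun t => (t - t⁻¹) / 2 - Real.log t with hf
  have hD : ∀ t : ℝ, 0 < t → HasDerivAt f ((1 - -(t^2)⁻¹)/2 - t⁻¹) t := fun t ht0 =>
    (((hasDerivAt_id t).sub (hasDerivAt_inv ht0.ne')).div_const 2).sub
      (Real.hasDerivAt_log ht0.ne')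
  have hmono : MonotoneOn f (Set.Ici (1:ℝ)) := by
    apply monotoneOn_of_deriv_nonneg (convex_Ici 1)
    · intro t ht
      exact (hD t (lt_of_lt_of_le one_pos ht)).continuousAt.continuousWithinAt
    · intro t ht
      rw [interior_Ici] at ht
      exact (hD t (lt_trans one_pos ht)).differentiableAt.differentiableWithinAt
    · intro t ht
      rw [interior_Ici] at ht
      have ht0 : (0:ℝ) < t := lt_trans one_pos ht
      rw [(hD t ht0).deriv]
      have key : (1 - -(t^2)⁻¹)/2 - t⁻¹ = (t-1)^2/(2*t^2) := by
        field_simp; ring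
      rw [key]; positivity
  have h1 : f 1 ≤ f x := hmono (by norm_num) hx hx
  simp only [hf] at h1
  norm_num at h1
  linarith

lemma aux_le_log {x : ℝ} (hx : 1 ≤ x) : 2 - 4/(x+1) ≤ Real.log x := by
  set f : ℝ → ℝ := fun t => Real.log t - (2 - 4/(t+1)) with hf
  have hD : ∀ t : ℝ, 0 < t → HasDerivAt f (t⁻¹ - (0 - (0 * (t+1) - 4 * 1)/(t+1)^2)) t := by
    intro t ht0
    have h1 : (t:ℝ) + 1 ≠ 0 := by positivity
    exact (Real.hasDerivAt_log ht0.ne').sub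
      ((hasDerivAt_const t 2).sub (((hasDerivAt_const t 4).div ((hasDerivAt_id t).add_const 1) h1)))
  have hmono : MonotoneOn f (Set.Ici (1:ℝ)) := by
    apply monotoneOn_of_deriv_nonneg (convex_Ici 1)
    · intro t ht
      exact (hD t (lt_of_lt_of_le one_pos ht)).continuousAt.continuousWithinAt
    · intro t ht
      rw [interior_Ici] at ht
      exact (hD t (lt_trans one_pos ht)).differentiableAt.differentiableWithinAt
    · intro t ht
      rw [interior_Ici] at ht
      have ht0 : (0:ℝ) < t := lt_trans one_pos ht
      rw [(hD t ht0).deriv]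
      have key : t⁻¹ - (0 - (0 * (t+1) - 4 * 1)/(t+1)^2) = (t-1)^2/(t*(t+1)^2) := by
        field_simp; ring
      rw [key]; positivity
  have h1 : f 1 ≤ f x := hmono (by norm_num) hx hx
  simp only [hf] at h1
  norm_num at h1
  linarith

lemma bernKL_eq {p q : ℝ} (hp : 0 ≤ p) (hp1 : p < 1) (hq : 0 < q) (hq1 : q < 1) :
    bernKL p q = p * Real.log p - p * Real.log q
      + (1 - p) * Real.log (1 - p) - (1 - p) * Real.log (1 - q) := by
  rcases eq_or_lt_of_le hp with h | h
  · rw [bernKL, ← h]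
    norm_num [Real.log_div one_ne_zero (show (1:ℝ) - q ≠ 0 by linarith)]
  · rw [bernKL, Real.log_div h.ne' hq.ne',
      Real.log_div (by linarith : (1:ℝ) - p ≠ 0) (by linarith : (1:ℝ) - q ≠ 0)]
    ring

lemma G_hasDerivAt {q : ℝ} (hq1 : q < 1) {y : ℝ} (hy0 : 0 < y) (hy1 : y < 1) :
    HasDerivAt (fun p : ℝ => p * Real.log p - p * Real.log q
      + (1 - p) * Real.log (1 - p) - (1 - p) * Real.log (1 - q))
      (Real.log y - Real.log q - Real.log (1 - y) + Real.log (1 - q)) y := by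
  have h1y : (0:ℝ) < 1 - y := by linarith
  have t1 : HasDerivAt (fun x : ℝ => x * Real.log x) (Real.log y + 1) y :=
    Real.hasDerivAt_mul_log hy0.ne'
  have t2 : HasDerivAt (fun x : ℝ => x * Real.log q) (1 * Real.log q) y :=
    (hasDerivAt_id y).mul_const _
  have t3 : HasDerivAt (fun x : ℝ => (1 - x) * Real.log (1 - x))
      ((Real.log (1 - y) + 1) * (0 - 1)) y := by
    have := (Real.hasDerivAt_mul_log h1y.ne').comp y
      ((hasDerivAt_const y 1).sub (hasDerivAt_id y))
    exact this
  have t4 : HasDerivAt (fun x : ℝ => (1 - x) * Real.log (1 - q)) ((0 - 1) * Real.log (1 - q)) y :=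
    ((hasDerivAt_const y 1).sub (hasDerivAt_id y)).mul_const _
  have := ((t1.sub t2).add t3).sub t4
  exact this.congr_deriv (by ring)

lemma bernKL_strictAntiOn {q : ℝ} (hq0 : 0 < q) (hq1 : q < 1) :
    StrictAntiOn (fun p => bernKL p q) (Set.Icc 0 q) := by
  have heq : ∀ p ∈ Set.Icc (0:ℝ) q, bernKL p q = p * Real.log p - p * Real.log q
      + (1 - p) * Real.log (1 - p) - (1 - p) * Real.log (1 - q) := fun p hp =>
    bernKL_eq hp.1 (lt_of_le_of_lt hp.2 hq1) hq0 hq1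
  have H : StrictAntiOn (fun p : ℝ => p * Real.log p - p * Real.log q
      + (1 - p) * Real.log (1 - p) - (1 - p) * Real.log (1 - q)) (Set.Icc 0 q) := by
    apply strictAntiOn_of_deriv_neg (convex_Icc 0 q)
    · apply Continuous.continuousOn
      exact ((Real.continuous_mul_log.sub (continuous_id.mul continuous_const)).add
        (Real.continuous_mul_log.comp (continuous_const.sub continuous_id))).sub
        ((continuous_const.sub continuous_id).mul continuous_const)
    · intro y hy
      rw [interior_Icc] at hy
      have hy0 : 0 < y := hy.1
      have hy1 : y < 1 := lt_trans hy.2 hq1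
      rw [(G_hasDerivAt hq1 hy0 hy1).deriv]
      have l1 : Real.log y < Real.log q := Real.log_lt_log hy0 hy.2
      have l2 : Real.log (1 - q) < Real.log (1 - y) :=
        Real.log_lt_log (by linarith) (by linarith [hy.2])
      linarith
  intro x hx y hy hxy
  have := H hx hy hxy
  simpa only [heq x hx, heq y hy] using this

lemma gKL_eq {δ p q : ℝ} (hδ0 : 0 < δ) (hp0 : 0 < p) (hpq : p < q) (hq1 : q < 1)
    (hroot : bernKL p q = δ) : gKL δ q = p := by
  have hq0 : 0 < q := hp0.trans hpq
  have hS : p ∈ {x : ℝ | x ∈ Set.Icc (0:ℝ) 1 ∧ bernKL x q ≤ δ} :=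
    ⟨⟨hp0.le, by linarith⟩, hroot.le⟩
  have hlb : ∀ x ∈ {x : ℝ | x ∈ Set.Icc (0:ℝ) 1 ∧ bernKL x q ≤ δ}, p ≤ x := by
    rintro x ⟨hx01, hxKL⟩
    by_contra hc
    push_neg at hc
    have h1 : bernKL p q < bernKL x q :=
      bernKL_strictAntiOn hq0 hq1 ⟨hx01.1, by linarith⟩ ⟨hp0.le, hpq.le⟩ hc
    rw [hroot] at h1
    linarith
  exact le_antisymm (csInf_le ⟨0, fun x hx => hx.1.1⟩ hS) (le_csInf ⟨p, hS⟩ hlb)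

lemma bernKL_pt1 {q : ℝ} (hq4 : (0.4:ℝ) ≤ q) (hq6 : q ≤ (0.6:ℝ)) :
    (0.21:ℝ) ≤ bernKL 0.1 q := by
  have hq0 : (0:ℝ) < q := by linarith
  have hq1 : q < 1 := by linarith
  have h1 : bernKL 0.1 q = 0.1 * Real.log 0.1 - 0.1 * Real.log q
      + 0.9 * Real.log 0.9 - 0.9 * Real.log (1 - q) := by
    rw [bernKL_eq (by norm_num) (by norm_num) hq0 hq1]
    norm_num
  have hlog2 : Real.log 2 ≤ 0.75 := by
    have := log_le_aux (show (1:ℝ) ≤ 2 by norm_num)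
    norm_num at this
    linarith
  have hlog15 : (0.4:ℝ) ≤ Real.log (3/2) := by
    have := aux_le_log (show (1:ℝ) ≤ 3/2 by norm_num)
    norm_num at this
    linarith
  have hq4' : Real.log q - Real.log 0.4 ≤ q / 0.4 - 1 := by
    rw [← Real.log_div hq0.ne' (by norm_num)]
    exact Real.log_le_sub_one_of_pos (by positivity)
  have hq6' : Real.log (1 - q) - Real.log 0.6 ≤ (1 - q) / 0.6 - 1 := by
    rw [← Real.log_div (by linarith : (1:ℝ) - q ≠ 0) (by norm_num)]
    exact Real.log_le_sub_one_of_pos (div_pos (by linarith) (by norm_num))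
  have e1 : Real.log (0.4:ℝ) = Real.log 0.1 + Real.log 4 := by
    rw [← Real.log_mul (by norm_num) (by norm_num)]
    norm_num
  have e2 : Real.log (0.9:ℝ) = Real.log 0.6 + Real.log (3/2) := by
    rw [← Real.log_mul (by norm_num) (by norm_num)]
    norm_num
  have e3 : Real.log (4:ℝ) = 2 * Real.log 2 := by
    rw [show (4:ℝ) = 2 * 2 by norm_num, Real.log_mul (by norm_num) (by norm_num)]
    ring
  have hq4'' : Real.log q - Real.log 0.4 ≤ 2.5 * q - 1 := by
    have : q / 0.4 = 2.5 * q := by ring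
    linarith [this ▸ hq4']
  have hq6'' : Real.log (1 - q) - Real.log 0.6 ≤ (1 - q) * (5/3) - 1 := by
    have : (1 - q) / 0.6 = (1 - q) * (5/3) := by ring
    linarith [this ▸ hq6']
  rw [h1]
  linarith [hq4'', hq6'']

lemma key_poly {p q : ℝ} (hp : (0.1:ℝ) ≤ p) (hpq : p ≤ q) (h4 : (0.4:ℝ) ≤ q)
    (h6 : q ≤ (0.6:ℝ)) :
    (q + p) * ((1 - p) * (1 - q)) + (2 - p - q) * (p * q) ≤ 4 * (p * (1 - p)) := by
  nlinarith [sq_nonneg (q - 0.5), sq_nonneg (p - 0.1), mul_nonneg (sub_nonneg.2 hp) (sub_nonneg.2 hpq), sq_nonneg (p - q), mul_nonneg (sub_nonneg.2 hp) (sub_nonneg.2 h4)]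

section FD
open ContinuousLinearMap
lemma log1sub_hasStrictDerivAt {t : ℝ} (ht : t < 1) :
    HasStrictDerivAt (fun t : ℝ => Real.log (1 - t)) (-(1 - t)⁻¹) t := by
  have h := (Real.hasStrictDerivAt_log (by linarith : (1:ℝ) - t ≠ 0)).comp t
    ((hasStrictDerivAt_const t 1).sub (hasStrictDerivAt_id t))
  exact h.congr_deriv (by ring)

lemma mul_log_hasStrictDerivAt {t : ℝ} (ht : 0 < t) :
    HasStrictDerivAt (fun t : ℝ => t * Real.log t) (Real.log t + 1) t := by
  have h := (hasStrictDerivAt_id t).mul (Real.hasStrictDerivAt_log ht.ne')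
  exact h.congr_deriv (by simp [ht.ne'])

lemma G2_hasStrictFDerivAt {p₀ q₀ : ℝ} (hp0 : 0 < p₀) (hp1 : p₀ < 1) (hq0 : 0 < q₀)
    (hq1 : q₀ < 1) :
    HasStrictFDerivAt (fun x : ℝ × ℝ => x.1 * Real.log x.1 - x.1 * Real.log x.2
      + (1 - x.1) * Real.log (1 - x.1) - (1 - x.1) * Real.log (1 - x.2))
      ((Real.log p₀ - Real.log q₀ - Real.log (1 - p₀) + Real.log (1 - q₀)) • fst ℝ ℝ ℝ
        + (-(p₀/q₀) + (1 - p₀)/(1 - q₀)) • snd ℝ ℝ ℝ) ((p₀, q₀) : ℝ × ℝ) := by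
  have h1 : HasStrictFDerivAt (fun x : ℝ × ℝ => x.1 * Real.log x.1)
      ((Real.log p₀ + 1) • fst ℝ ℝ ℝ) (p₀, q₀) :=
    (mul_log_hasStrictDerivAt hp0).comp_hasStrictFDerivAt (𝕜 := ℝ) (h₂ := fun t : ℝ => t * Real.log t) (f := Prod.fst) _
      hasStrictFDerivAt_fst
  have hlogsnd : HasStrictFDerivAt (fun x : ℝ × ℝ => Real.log x.2)
      (q₀⁻¹ • snd ℝ ℝ ℝ) (p₀, q₀) :=
    (Real.hasStrictDerivAt_log hq0.ne').comp_hasStrictFDerivAt (𝕜 := ℝ) (h₂ := Real.log) (f := Prod.snd) _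
      hasStrictFDerivAt_snd
  have h2 : HasStrictFDerivAt (fun x : ℝ × ℝ => x.1 * Real.log x.2)
      (p₀ • (q₀⁻¹ • snd ℝ ℝ ℝ) + Real.log q₀ • fst ℝ ℝ ℝ) (p₀, q₀) :=
    hasStrictFDerivAt_fst.mul hlogsnd
  have h3d : HasStrictDerivAt (fun t : ℝ => (1 - t) * Real.log (1 - t))
      (-(Real.log (1 - p₀)) - 1) p₀ := by
    have h := ((hasStrictDerivAt_const p₀ 1).sub (hasStrictDerivAt_id p₀)).mul
      (log1sub_hasStrictDerivAt hp1)
    have h1p : (1:ℝ) - p₀ ≠ 0 := by linarith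
    refine h.congr_deriv ?_
    simp only [Pi.sub_apply, id_eq]
    field_simp
    ring
  have h3 : HasStrictFDerivAt (fun x : ℝ × ℝ => (1 - x.1) * Real.log (1 - x.1))
      ((-(Real.log (1 - p₀)) - 1) • fst ℝ ℝ ℝ) (p₀, q₀) :=
    h3d.comp_hasStrictFDerivAt (𝕜 := ℝ) (h₂ := fun t : ℝ => (1 - t) * Real.log (1 - t)) (f := Prod.fst) _
      hasStrictFDerivAt_fst
  have h4a : HasStrictFDerivAt (fun x : ℝ × ℝ => 1 - x.1)
      (0 - fst ℝ ℝ ℝ) (p₀, q₀) :=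
    (hasStrictFDerivAt_const 1 _).sub hasStrictFDerivAt_fst
  have h4b : HasStrictFDerivAt (fun x : ℝ × ℝ => Real.log (1 - x.2))
      ((-(1 - q₀)⁻¹) • snd ℝ ℝ ℝ) (p₀, q₀) :=
    (log1sub_hasStrictDerivAt hq1).comp_hasStrictFDerivAt (𝕜 := ℝ) (h₂ := fun t : ℝ => Real.log (1 - t))
      (f := Prod.snd) _ hasStrictFDerivAt_snd
  have h4 : HasStrictFDerivAt (fun x : ℝ × ℝ => (1 - x.1) * Real.log (1 - x.2))
      ((1 - p₀) • ((-(1 - q₀)⁻¹) • snd ℝ ℝ ℝ) + Real.log (1 - q₀) • (0 - fst ℝ ℝ ℝ)) (p₀, q₀) :=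
    h4a.mul h4b
  have total := ((h1.sub h2).add h3).sub h4
  refine total.congr_fderiv ?_
  refine ContinuousLinearMap.ext fun y => ?_
  simp only [ContinuousLinearMap.add_apply, ContinuousLinearMap.sub_apply,
    ContinuousLinearMap.smul_apply, ContinuousLinearMap.coe_fst', ContinuousLinearMap.coe_snd',
    ContinuousLinearMap.zero_apply, smul_eq_mul]
  have hq0' : q₀ ≠ 0 := hq0.ne'
  have hq1' : (1:ℝ) - q₀ ≠ 0 := by linarith
  field_simp
  ring

end FD

theorem stmt_8 (δ : ℝ) (hδ0 : 0 < δ) (hδ : δ ≤ 0.2) :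
    ∀ q ∈ Set.Icc (0.4 : ℝ) 0.6,
      DifferentiableAt ℝ (gKL δ) q ∧ (1 / 2 : ℝ) ≤ deriv (gKL δ) q := by
  rintro q₀ ⟨hq₀4, hq₀6⟩
  have hq₀0 : (0:ℝ) < q₀ := by linarith
  have hq₀1 : q₀ < 1 := by linarith
  have hGcont : Continuous (fun p : ℝ => p * Real.log p - p * Real.log q₀
      + (1 - p) * Real.log (1 - p) - (1 - p) * Real.log (1 - q₀)) :=
    ((Real.continuous_mul_log.sub (continuous_id.mul continuous_const)).add
      (Real.continuous_mul_log.comp (continuous_const.sub continuous_id))).sub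
      ((continuous_const.sub continuous_id).mul continuous_const)
  have hcontOn : ContinuousOn (fun p => bernKL p q₀) (Set.Icc 0.1 q₀) := by
    apply hGcont.continuousOn.congr
    intro p hp
    exact bernKL_eq (by linarith [hp.1] : (0:ℝ) ≤ p) (by linarith [hp.2]) hq₀0 hq₀1
  have hself : bernKL q₀ q₀ = 0 := by
    simp [bernKL, div_self hq₀0.ne', div_self (show (1:ℝ) - q₀ ≠ 0 by linarith)]
  have hmem : δ ∈ Set.Icc (bernKL q₀ q₀) (bernKL 0.1 q₀) := by
    constructor
    · rw [hself]; linarith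
    · have := bernKL_pt1 hq₀4 hq₀6; linarith
  obtain ⟨p₀, hp₀mem, hp₀root'⟩ :=
    intermediate_value_Icc' (by linarith : (0.1:ℝ) ≤ q₀) hcontOn hmem
  have hp₀root : bernKL p₀ q₀ = δ := hp₀root'
  have hp₀1 : (0.1:ℝ) < p₀ := by
    rcases eq_or_lt_of_le hp₀mem.1 with h | h
    · exfalso
      rw [← h] at hp₀root
      have := bernKL_pt1 hq₀4 hq₀6
      rw [hp₀root] at this
      linarith
    · exact h
  have hp₀q : p₀ < q₀ := by
    rcases eq_or_lt_of_le hp₀mem.2 with h | h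
    · exfalso; rw [h, hself] at hp₀root; linarith
    · exact h
  have hp₀0 : 0 < p₀ := by linarith
  have hp₀lt1 : p₀ < 1 := by linarith
  have h1p₀ : (0:ℝ) < 1 - p₀ := by linarith
  have h1q₀ : (0:ℝ) < 1 - q₀ := by linarith
  set a : ℝ := Real.log p₀ - Real.log q₀ - Real.log (1 - p₀) + Real.log (1 - q₀) with ha_def
  set b : ℝ := -(p₀/q₀) + (1 - p₀)/(1 - q₀) with hb_def
  have ha : a < 0 := by
    have l1 := Real.log_lt_log hp₀0 hp₀q
    have l2 := Real.log_lt_log h1q₀ (by linarith : 1 - q₀ < 1 - p₀)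
    rw [ha_def]; linarith
  have hb : 0 < b := by
    have h1 : p₀/q₀ < 1 := (div_lt_one hq₀0).mpr hp₀q
    have h2 : 1 < (1 - p₀)/(1 - q₀) := (one_lt_div h1q₀).mpr (by linarith)
    rw [hb_def]; linarith
  have hane : a ≠ 0 := ne_of_lt ha
  set L : ℝ × ℝ →L[ℝ] ℝ :=
    a • ContinuousLinearMap.fst ℝ ℝ ℝ + b • ContinuousLinearMap.snd ℝ ℝ ℝ with hL
  set Alin : ℝ × ℝ →L[ℝ] ℝ × ℝ := L.prod (ContinuousLinearMap.snd ℝ ℝ ℝ) with hAlin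
  set Blin : ℝ × ℝ →L[ℝ] ℝ × ℝ :=
    (a⁻¹ • (ContinuousLinearMap.fst ℝ ℝ ℝ - b • ContinuousLinearMap.snd ℝ ℝ ℝ)).prod
      (ContinuousLinearMap.snd ℝ ℝ ℝ) with hBlin
  have hleft : Function.LeftInverse Blin Alin := by
    intro x
    apply Prod.ext
    · simp [hAlin, hBlin, hL, smul_eq_mul]
      field_simp
    · simp [hAlin, hBlin]
  have hright : Function.RightInverse Blin Alin := by
    intro x
    apply Prod.ext
    · simp [hAlin, hBlin, hL, smul_eq_mul]
      field_simp
      ring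
    · simp [hAlin, hBlin]
  set A : (ℝ × ℝ) ≃L[ℝ] ℝ × ℝ := ContinuousLinearEquiv.equivOfInverse Alin Blin hleft hright
    with hA
  have hbern : HasStrictFDerivAt (fun x : ℝ × ℝ => bernKL x.1 x.2) L (p₀, q₀) := by
    have hG2 := G2_hasStrictFDerivAt hp₀0 hp₀lt1 hq₀0 hq₀1
    apply hG2.congr_of_eventuallyEq
    have hopen : IsOpen ((Set.Ioo (0:ℝ) 1) ×ˢ (Set.Ioo (0:ℝ) 1)) :=
      isOpen_Ioo.prod isOpen_Ioo
    have hx₀mem : ((p₀, q₀) : ℝ × ℝ) ∈ (Set.Ioo (0:ℝ) 1) ×ˢ (Set.Ioo (0:ℝ) 1) :=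
      ⟨⟨hp₀0, hp₀lt1⟩, ⟨hq₀0, hq₀1⟩⟩
    filter_upwards [hopen.mem_nhds hx₀mem] with x hx
    exact (bernKL_eq hx.1.1.le hx.1.2 hx.2.1 hx.2.2).symm
  set Φ : ℝ × ℝ → ℝ × ℝ := fun x => (bernKL x.1 x.2, x.2) with hΦdef
  have hΦ : HasStrictFDerivAt Φ (A : ℝ × ℝ →L[ℝ] ℝ × ℝ) (p₀, q₀) :=
    hbern.prodMk hasStrictFDerivAt_snd
  have hx₀img : Φ (p₀, q₀) = (δ, q₀) := by
    simp only [hΦdef, hp₀root]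
  set ψ₂ : ℝ × ℝ → ℝ × ℝ := hΦ.localInverse Φ A (p₀, q₀) with hψ₂
  have hinv : ∀ᶠ y in 𝓝 ((δ, q₀) : ℝ × ℝ), Φ (ψ₂ y) = y := by
    have := hΦ.eventually_right_inverse
    rwa [hx₀img] at this
  have hψ₂x₀ : ψ₂ (δ, q₀) = (p₀, q₀) := by
    rw [← hx₀img]; exact hΦ.localInverse_apply_image
  have hψ₂strict : HasStrictFDerivAt ψ₂ (A.symm : ℝ × ℝ →L[ℝ] ℝ × ℝ) (δ, q₀) := by
    have := hΦ.to_localInverse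
    rwa [hx₀img] at this
  set ψ : ℝ → ℝ := fun q => (ψ₂ (δ, q)).1 with hψdef
  have hcurve : HasDerivAt (fun q : ℝ => ((δ, q) : ℝ × ℝ)) (((0:ℝ), (1:ℝ)) : ℝ × ℝ) q₀ :=
    (hasDerivAt_const q₀ δ).prodMk (hasDerivAt_id q₀)
  have hψ₂comp : HasDerivAt (fun q => ψ₂ (δ, q)) (A.symm ((0:ℝ), (1:ℝ))) q₀ :=
    hψ₂strict.hasFDerivAt.comp_hasDerivAt q₀ hcurve
  have hψderiv : HasDerivAt ψ ((A.symm (((0:ℝ), (1:ℝ)) : ℝ × ℝ)).1) q₀ :=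
    (ContinuousLinearMap.fst ℝ ℝ ℝ).hasFDerivAt.comp_hasDerivAt q₀ hψ₂comp
  have hd : (A.symm (((0:ℝ), (1:ℝ)) : ℝ × ℝ)).1 = b / (-a) := by
    rw [hA, ContinuousLinearEquiv.symm_equivOfInverse, ContinuousLinearEquiv.equivOfInverse_apply]
    simp only [hBlin, ContinuousLinearMap.prod_apply, ContinuousLinearMap.smul_apply,
      ContinuousLinearMap.sub_apply, ContinuousLinearMap.coe_fst', ContinuousLinearMap.coe_snd',
      smul_eq_mul]
    field_simp
    ring
  have htend : Filter.Tendsto (fun q : ℝ => ((δ, q) : ℝ × ℝ)) (𝓝 q₀) (𝓝 (δ, q₀)) :=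
    hcurve.continuousAt
  have hrootev : ∀ᶠ q in 𝓝 q₀, bernKL (ψ q) q = δ := by
    filter_upwards [htend.eventually hinv] with q hq
    have h2 : (ψ₂ (δ, q)).2 = q := congrArg Prod.snd hq
    have h1 : bernKL (ψ₂ (δ, q)).1 (ψ₂ (δ, q)).2 = δ := congrArg Prod.fst hq
    rw [h2] at h1
    exact h1
  have hψq₀ : ψ q₀ = p₀ := by
    show (ψ₂ (δ, q₀)).1 = p₀
    rw [hψ₂x₀]
  have hψtend : Filter.Tendsto ψ (𝓝 q₀) (𝓝 p₀) := by
    have := hψderiv.continuousAt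
    rwa [ContinuousAt, hψq₀] at this
  have hev1 : ∀ᶠ q in 𝓝 q₀, 0 < ψ q := hψtend.eventually (eventually_gt_nhds hp₀0)
  have hev2 : ∀ᶠ q in 𝓝 q₀, 0 < q - ψ q := by
    have hsub : Filter.Tendsto (fun q => q - ψ q) (𝓝 q₀) (𝓝 (q₀ - p₀)) :=
      Filter.Tendsto.sub tendsto_id hψtend
    exact hsub.eventually (eventually_gt_nhds (by linarith : (0:ℝ) < q₀ - p₀))
  have hev3 : ∀ᶠ q in 𝓝 q₀, q < 1 := eventually_lt_nhds hq₀1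
  have hev : ∀ᶠ q in 𝓝 q₀, gKL δ q = ψ q := by
    filter_upwards [hrootev, hev1, hev2, hev3] with q h1 h2 h3 h4
    exact gKL_eq hδ0 h2 (by linarith) h4 h1
  have hdiff : DifferentiableAt ℝ (gKL δ) q₀ :=
    hψderiv.differentiableAt.congr_of_eventuallyEq hev
  refine ⟨hdiff, ?_⟩
  have hderiveq : deriv (gKL δ) q₀ = b / (-a) := by
    rw [Filter.EventuallyEq.deriv_eq hev, hψderiv.deriv, hd]
  rw [hderiveq, le_div_iff₀ (by linarith : (0:ℝ) < -a)]
  have hL1a : Real.log q₀ - Real.log p₀ ≤ (q₀/p₀ - p₀/q₀)/2 := by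
    have h := log_le_aux (show (1:ℝ) ≤ q₀/p₀ from (one_le_div hp₀0).mpr hp₀q.le)
    rwa [Real.log_div hq₀0.ne' hp₀0.ne', inv_div] at h
  have hL1b : Real.log (1-p₀) - Real.log (1-q₀) ≤ ((1-p₀)/(1-q₀) - (1-q₀)/(1-p₀))/2 := by
    have h := log_le_aux (show (1:ℝ) ≤ (1-p₀)/(1-q₀) from (one_le_div h1q₀).mpr (by linarith))
    rwa [Real.log_div h1p₀.ne' h1q₀.ne', inv_div] at h
  have hfrac : q₀/p₀ - p₀/q₀ + ((1-p₀)/(1-q₀) - (1-q₀)/(1-p₀))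
      ≤ 4*((1-p₀)/(1-q₀) - p₀/q₀) := by
    rw [← sub_nonneg]
    have expand : 4*((1-p₀)/(1-q₀) - p₀/q₀)
        - (q₀/p₀ - p₀/q₀ + ((1-p₀)/(1-q₀) - (1-q₀)/(1-p₀)))
        = ((q₀-p₀) * (4*(p₀*(1-p₀)) - ((q₀+p₀)*((1-p₀)*(1-q₀)) + (2-p₀-q₀)*(p₀*q₀))))
          / (p₀*q₀*((1-p₀)*(1-q₀))) := by
      field_simp
      ring
    rw [expand]
    apply div_nonneg
    · apply mul_nonneg (by linarith)
      have := key_poly hp₀1.le hp₀q.le hq₀4 hq₀6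
      linarith
    · positivity
  have hadef := ha_def
  have hbdef := hb_def
  linarith [hL1a, hL1b, hfrac]
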